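/- Let R be an associative unital ℂ-algebra containing elements x, y, z satisfying xy − yx = 2iħz, yz − zy = 2iħx, zx − xz = 2iħy (ħ ∈ ℂ), and a central element μ commuting with x, y, z such that μ² = −4(x² + y² + z² + ħ²). Let M = xA + yB + zC with A, B, C the 4×4 matrices A = [[0,1,0,0],[−1,0,0,0],[0,0,0,−1],[0,0,1,0]], B = [[0,0,1,0],[0,0,0,1],[−1,0,0,0],[0,−1,0,0]], C = [[0,0,0,1],[0,0,−1,0],[0,1,0,0],[−1,0,0,0]], and set S = (μ² − 12ħ²)·I − 8iħM. Then (S − (μ − 2iħ)²·I)(S − (μ + 2iħ)²·I) = 0, i.e. the matrix T(μ²) = S has eigenvalues ν₁ = (μ − 2iħ)² and ν₂ = (μ + 2iħ)². -/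
import Mathlib

/-- The 4×4 matrix `A` (with entries in any ring `R`). -/
def matA (R : Type*) [Ring R] : Matrix (Fin 4) (Fin 4) R :=
  !![0, 1, 0, 0; -1, 0, 0, 0; 0, 0, 0, -1; 0, 0, 1, 0]

/-- The 4×4 matrix `B` (with entries in any ring `R`). -/
def matB (R : Type*) [Ring R] : Matrix (Fin 4) (Fin 4) R :=
  !![0, 0, 1, 0; 0, 0, 0, 1; -1, 0, 0, 0; 0, -1, 0, 0]

/-- The 4×4 matrix `C` (with entries in any ring `R`). -/
def matC (R : Type*) [Ring R] : Matrix (Fin 4) (Fin 4) R :=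
  !![0, 0, 0, 1; 0, 0, -1, 0; 0, 1, 0, 0; -1, 0, 0, 0]

section Aux

variable {R : Type*} [Ring R]

lemma matAA : matA R * matA R = -1 := by
  ext i j; fin_cases i <;> fin_cases j <;>
    simp [matA, Matrix.mul_apply, Fin.sum_univ_four, Matrix.one_apply,
      Matrix.vecHead, Matrix.vecTail]

lemma matBB : matB R * matB R = -1 := by
  ext i j; fin_cases i <;> fin_cases j <;>
    simp [matB, Matrix.mul_apply, Fin.sum_univ_four, Matrix.one_apply,
      Matrix.vecHead, Matrix.vecTail]

lemma matCC : matC R * matC R = -1 := by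
  ext i j; fin_cases i <;> fin_cases j <;>
    simp [matC, Matrix.mul_apply, Fin.sum_univ_four, Matrix.one_apply,
      Matrix.vecHead, Matrix.vecTail]

lemma matAB : matA R * matB R = matC R := by
  ext i j; fin_cases i <;> fin_cases j <;>
    simp [matA, matB, matC, Matrix.mul_apply, Fin.sum_univ_four,
      Matrix.vecHead, Matrix.vecTail]

lemma matBA : matB R * matA R = -(matC R) := by
  ext i j; fin_cases i <;> fin_cases j <;>
    simp [matA, matB, matC, Matrix.mul_apply, Fin.sum_univ_four,
      Matrix.vecHead, Matrix.vecTail]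

lemma matBC : matB R * matC R = matA R := by
  ext i j; fin_cases i <;> fin_cases j <;>
    simp [matA, matB, matC, Matrix.mul_apply, Fin.sum_univ_four,
      Matrix.vecHead, Matrix.vecTail]

lemma matCB : matC R * matB R = -(matA R) := by
  ext i j; fin_cases i <;> fin_cases j <;>
    simp [matA, matB, matC, Matrix.mul_apply, Fin.sum_univ_four,
      Matrix.vecHead, Matrix.vecTail]

lemma matCA : matC R * matA R = matB R := by
  ext i j; fin_cases i <;> fin_cases j <;>
    simp [matA, matB, matC, Matrix.mul_apply, Fin.sum_univ_four,
      Matrix.vecHead, Matrix.vecTail]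

lemma matAC : matA R * matC R = -(matB R) := by
  ext i j; fin_cases i <;> fin_cases j <;>
    simp [matA, matB, matC, Matrix.mul_apply, Fin.sum_univ_four,
      Matrix.vecHead, Matrix.vecTail]

lemma matA1 (r : R) : matA R * (r • 1) = r • matA R := by
  ext i j; fin_cases i <;> fin_cases j <;>
    simp [matA, Matrix.mul_apply, Fin.sum_univ_four, Matrix.one_apply,
      Matrix.vecHead, Matrix.vecTail]

lemma matB1 (r : R) : matB R * (r • 1) = r • matB R := by
  ext i j; fin_cases i <;> fin_cases j <;>
    simp [matB, Matrix.mul_apply, Fin.sum_univ_four, Matrix.one_apply,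
      Matrix.vecHead, Matrix.vecTail]

lemma matC1 (r : R) : matC R * (r • 1) = r • matC R := by
  ext i j; fin_cases i <;> fin_cases j <;>
    simp [matC, Matrix.mul_apply, Fin.sum_univ_four, Matrix.one_apply,
      Matrix.vecHead, Matrix.vecTail]

lemma mat11 (r : R) : (1 : Matrix (Fin 4) (Fin 4) R) * (r • 1) = r • 1 := by
  rw [one_mul]

/-- `(p•P)*(q•Q) = (p*q)•(P*Q)` provided the entries of `P` commute with scalars. -/
lemma smulmul {P : Matrix (Fin 4) (Fin 4) R}
    (hP : ∀ r : R, P * (r • 1) = r • P) (p q : R) (Q : Matrix (Fin 4) (Fin 4) R) :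
    (p • P) * (q • Q) = (p * q) • (P * Q) := by
  calc (p • P) * (q • Q) = p • (P * ((q • (1 : Matrix (Fin 4) (Fin 4) R)) * Q)) := by
        rw [Matrix.smul_mul, Matrix.smul_mul, one_mul]
    _ = p • ((P * (q • 1)) * Q) := by rw [mul_assoc]
    _ = (p * q) • (P * Q) := by rw [hP, Matrix.smul_mul, smul_smul]

end Aux

/-- with `x, y, z` satisfying the `su(2)_h` relations (`ħ = hb`) and `μ`
central with `μ² = −4(x² + y² + z² + ħ²)`, the matrix `S = T(μ²) = (μ² − 12ħ²)I − 8iħM`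
satisfies `(S − (μ − 2iħ)²I)(S − (μ + 2iħ)²I) = 0`, i.e. `S` has eigenvalues
`ν₁ = (μ − 2iħ)²` and `ν₂ = (μ + 2iħ)²`. -/
theorem T_mu_squared_eigenvalues
    {R : Type*} [Ring R] [Algebra ℂ R] (hb : ℂ) (x y z μ : R)
    (hxy : x * y - y * x = (2 * Complex.I * hb) • z)
    (hyz : y * z - z * y = (2 * Complex.I * hb) • x)
    (hzx : z * x - x * z = (2 * Complex.I * hb) • y)
    (hcentral : ∀ r : R, μ * r = r * μ)
    (hμsq : μ * μ = (-4 : ℂ) • (x * x + y * y + z * z + (hb ^ 2) • (1 : R))) :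
    let c : R := (2 * Complex.I * hb) • (1 : R)
    let M : Matrix (Fin 4) (Fin 4) R := x • matA R + y • matB R + z • matC R
    let S : Matrix (Fin 4) (Fin 4) R :=
      (μ * μ - (12 * hb ^ 2) • (1 : R)) • (1 : Matrix (Fin 4) (Fin 4) R)
        - (8 * Complex.I * hb) • M
    (S - ((μ - c) ^ 2) • (1 : Matrix (Fin 4) (Fin 4) R))
        * (S - ((μ + c) ^ 2) • (1 : Matrix (Fin 4) (Fin 4) R)) = 0 := by
  intro c M S
  have hκ2 : (2 * Complex.I * hb) * (2 * Complex.I * hb) = -4 * hb ^ 2 := by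
    linear_combination (4 * hb ^ 2) * Complex.I_sq
  -- elementary facts about `c`
  have hcμ : c * μ = (2 * Complex.I * hb) • μ := by
    show ((2 * Complex.I * hb) • (1 : R)) * μ = _
    rw [smul_mul_assoc, one_mul]
  have hμc : μ * c = (2 * Complex.I * hb) • μ := by
    show μ * ((2 * Complex.I * hb) • (1 : R)) = _
    rw [mul_smul_comm, mul_one]
  have hcc : c * c = (-4 : ℂ) • ((hb ^ 2 : ℂ) • (1 : R)) := by
    show ((2 * Complex.I * hb) • (1 : R)) * ((2 * Complex.I * hb) • (1 : R)) = _
    rw [smul_mul_assoc, one_mul, smul_smul, hκ2, smul_smul]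
  -- the key quadratic relation for `M`
  have hxy' : x * y = (2 * Complex.I * hb) • z + y * x := sub_eq_iff_eq_add.mp hxy
  have hyz' : y * z = (2 * Complex.I * hb) • x + z * y := sub_eq_iff_eq_add.mp hyz
  have hzx' : z * x = (2 * Complex.I * hb) • y + x * z := sub_eq_iff_eq_add.mp hzx
  have hMM : M * M = (2 * Complex.I * hb) • M
      - ((x * x) • (1 : Matrix (Fin 4) (Fin 4) R) + (y * y) • 1 + (z * z) • 1) := by
    show (x • matA R + y • matB R + z • matC R) * (x • matA R + y • matB R + z • matC R)
      = (2 * Complex.I * hb) • (x • matA R + y • matB R + z • matC R)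
        - ((x * x) • (1 : Matrix (Fin 4) (Fin 4) R) + (y * y) • 1 + (z * z) • 1)
    simp only [add_mul, mul_add, smulmul matA1, smulmul matB1, smulmul matC1,
      matAA, matAB, matAC, matBA, matBB, matBC, matCA, matCB, matCC]
    rw [hxy', hyz', hzx']
    simp only [add_smul, smul_neg, smul_add, smul_assoc]
    abel
  -- M commutes with scalar matrices of central elements
  have hM1 : ∀ r : R, (∀ s : R, r * s = s * r) →
      M * (r • (1 : Matrix (Fin 4) (Fin 4) R)) = r • M := by
    intro r hr
    show (x • matA R + y • matB R + z • matC R) * (r • 1)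
      = r • (x • matA R + y • matB R + z • matC R)
    rw [add_mul, add_mul, Matrix.smul_mul, Matrix.smul_mul, Matrix.smul_mul,
      matA1, matB1, matC1, smul_add, smul_add]
    simp only [smul_smul, hr]
  have hMμ : M * (μ • (1 : Matrix (Fin 4) (Fin 4) R)) = μ • M := hM1 μ hcentral
  -- scalar-level identities
  have helem1 : μ * μ - (12 * hb ^ 2) • (1 : R) - (μ - c) ^ 2
      = (4 * Complex.I * hb) • μ + (-8 * hb ^ 2 : ℂ) • (1 : R) := by
    have e : (μ - c) ^ 2 = μ * μ - (2 * Complex.I * hb) • μ - (2 * Complex.I * hb) • μ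
        + (-4 : ℂ) • ((hb ^ 2 : ℂ) • (1 : R)) := by
      rw [pow_two, mul_sub, sub_mul, sub_mul, hμc, hcμ, hcc]; abel
    rw [e]; module
  have helem2 : μ * μ - (12 * hb ^ 2) • (1 : R) - (μ + c) ^ 2
      = (-4 * Complex.I * hb) • μ + (-8 * hb ^ 2 : ℂ) • (1 : R) := by
    have e : (μ + c) ^ 2 = μ * μ + (2 * Complex.I * hb) • μ + (2 * Complex.I * hb) • μ
        + (-4 : ℂ) • ((hb ^ 2 : ℂ) • (1 : R)) := by
      rw [pow_two, mul_add, add_mul, add_mul, hμc, hcμ, hcc]; abel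
    rw [e]; module
  have hκκ1 : (4 * Complex.I * hb) • ((2 * Complex.I * hb) • (1 : Matrix (Fin 4) (Fin 4) R))
      = (-8 * hb ^ 2 : ℂ) • (1 : Matrix (Fin 4) (Fin 4) R) := by
    rw [smul_smul]
    congr 1
    linear_combination (8 * hb ^ 2) * Complex.I_sq
  -- factor the two matrices
  have key1 : S - ((μ - c) ^ 2) • (1 : Matrix (Fin 4) (Fin 4) R)
      = (4 * Complex.I * hb) • (μ • (1 : Matrix (Fin 4) (Fin 4) R)
          + (2 * Complex.I * hb) • (1 : Matrix (Fin 4) (Fin 4) R) - (M + M)) := by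
    show (μ * μ - (12 * hb ^ 2) • (1 : R)) • (1 : Matrix (Fin 4) (Fin 4) R)
        - (8 * Complex.I * hb) • M - ((μ - c) ^ 2) • (1 : Matrix (Fin 4) (Fin 4) R) = _
    rw [sub_right_comm, ← sub_smul, helem1, add_smul,
      show (8 * Complex.I * hb : ℂ) = 4 * Complex.I * hb + 4 * Complex.I * hb by ring,
      add_smul]
    simp only [smul_add, smul_sub]
    rw [hκκ1]
    simp only [neg_smul, smul_assoc, one_smul]
    all_goals abel
  have key2 : S - ((μ + c) ^ 2) • (1 : Matrix (Fin 4) (Fin 4) R)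
      = (4 * Complex.I * hb) • ((2 * Complex.I * hb) • (1 : Matrix (Fin 4) (Fin 4) R)
          - μ • (1 : Matrix (Fin 4) (Fin 4) R) - (M + M)) := by
    show (μ * μ - (12 * hb ^ 2) • (1 : R)) • (1 : Matrix (Fin 4) (Fin 4) R)
        - (8 * Complex.I * hb) • M - ((μ + c) ^ 2) • (1 : Matrix (Fin 4) (Fin 4) R) = _
    rw [sub_right_comm, ← sub_smul, helem2, add_smul,
      show (-4 * Complex.I * hb : ℂ) = -(4 * Complex.I * hb) by ring, neg_smul,
      show (8 * Complex.I * hb : ℂ) = 4 * Complex.I * hb + 4 * Complex.I * hb by ring,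
      add_smul]
    simp only [smul_add, smul_sub]
    rw [hκκ1]
    simp only [neg_smul, smul_assoc, one_smul]
    all_goals abel
  -- the core identity
  have key3 : (μ • (1 : Matrix (Fin 4) (Fin 4) R)
        + (2 * Complex.I * hb) • (1 : Matrix (Fin 4) (Fin 4) R) - (M + M))
      * ((2 * Complex.I * hb) • (1 : Matrix (Fin 4) (Fin 4) R)
        - μ • (1 : Matrix (Fin 4) (Fin 4) R) - (M + M)) = 0 := by
    simp only [sub_mul, mul_sub, add_mul, mul_add, Matrix.mul_smul, Matrix.smul_mul,
      one_mul, mul_one, hMμ, hMM]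
    rw [smul_smul μ μ, hμsq, smul_smul ((2:ℂ) * Complex.I * hb) ((2:ℂ) * Complex.I * hb), hκ2]
    simp only [smul_assoc, one_smul, add_smul, smul_add, smul_sub,
      smul_comm μ ((2:ℂ) * Complex.I * hb)]
    have hconv : ((-4 * hb ^ 2 : ℂ)) • (1 : Matrix (Fin 4) (Fin 4) R)
        = (-4 : ℤ) • ((hb ^ 2 : ℂ) • (1 : Matrix (Fin 4) (Fin 4) R)) := by
      rw [← Int.cast_smul_eq_zsmul ℂ, smul_smul]
      norm_num
    rw [hconv, show ((-4 : ℂ)) = ((-4 : ℤ) : ℂ) by norm_num]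
    simp only [Int.cast_smul_eq_zsmul]
    abel
  rw [key1, key2, Matrix.smul_mul, Matrix.mul_smul, key3, smul_zero, smul_zero]
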